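/- Every telescopic numerical semigroup is symmetric: if S is a numerical semigroup generated by a telescopic sequence (n_1,...,n_k), then for every integer x, x ∉ S if and only if g(S) − x ∈ S. -/

import Mathlib

/-- Membership of an integer in an additive submonoid of `ℕ`, viewed inside `ℤ`
via the inclusion `ℕ ⊆ ℤ`. -/
def AddSubmonoid.zmem (S : AddSubmonoid ℕ) (x : ℤ) : Prop :=
  ∃ n : ℕ, n ∈ S ∧ (n : ℤ) = x

/-- The Frobenius number `g(S) = max {x ∈ ℤ : x ∉ S}` of a numerical semigroup. -/
noncomputable def frobeniusNumber (S : AddSubmonoid ℕ) : ℤ :=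
  sSup {x : ℤ | ¬ S.zmem x}

/-- The set of pseudo-Frobenius numbers
`T(S) = {x ∈ ℤ \ S : x + s ∈ S for all s ∈ S, s ≠ 0}`. -/
def pseudoFrobeniusSet (S : AddSubmonoid ℕ) : Set ℤ :=
  {x : ℤ | ¬ S.zmem x ∧ ∀ s ∈ S, s ≠ 0 → S.zmem (x + s)}

/-- `d i = gcd(n 0, …, n i)`, the gcd of the first `i+1` terms of the sequence. -/
def partialGcd (k : ℕ) (n : Fin k → ℕ) (i : Fin k) : ℕ :=
  (Finset.univ.filter (fun j => j ≤ i)).gcd n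

/-- A sequence `n 0 < n 1 < ⋯ < n (k-1)` of positive integers with
`gcd = 1` is telescopic if for every `i ≥ 1`, `n i / d i` belongs to the
submonoid of `ℕ` generated by `n 0 / d (i-1), …, n (i-1) / d (i-1)`,
where `d i = gcd(n 0, …, n i)`. -/
def IsTelescopic (k : ℕ) (n : Fin k → ℕ) : Prop :=
  StrictMono n ∧ (∀ i, 0 < n i) ∧ Finset.univ.gcd n = 1 ∧
  ∀ i : Fin k, 0 < (i : ℕ) →
    n i / partialGcd k n i ∈ AddSubmonoid.closure
      {m : ℕ | ∃ j : Fin k, j < i ∧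
        m = n j / ((Finset.univ.filter (fun j' => j' < i)).gcd n)}

namespace Stmt4Aux

open AddSubmonoid Finset

lemma zmem_natCast {S : AddSubmonoid ℕ} {p : ℕ} : S.zmem (p : ℤ) ↔ p ∈ S := by
  constructor
  · rintro ⟨q, hq, he⟩
    have hqp : q = p := by exact_mod_cast he
    exact hqp ▸ hq
  · exact fun h => ⟨p, h, rfl⟩

lemma zmem_nonneg {S : AddSubmonoid ℕ} {x : ℤ} (h : S.zmem x) : 0 ≤ x := by
  obtain ⟨p, _, rfl⟩ := h; positivity

/-- residue existence -/
lemma exists_residue (d m : ℕ) (hd : 0 < d) (hco : Nat.Coprime d m) (x : ℤ) :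
    ∃ a : ℕ, a < d ∧ ∃ t : ℤ, x = d * t + a * m := by
  have hco' : IsCoprime (d : ℤ) (m : ℤ) := by
    rw [Int.isCoprime_iff_gcd_eq_one]; exact_mod_cast hco
  obtain ⟨u, v, huv⟩ := hco'
  refine ⟨((x * v) % d).toNat, ?_, x * u + ((x * v) / d) * m, ?_⟩
  · have h1 : 0 ≤ (x * v) % (d : ℤ) := Int.emod_nonneg _ (by positivity)
    have h2 : (x * v) % (d : ℤ) < d := Int.emod_lt_of_pos _ (by exact_mod_cast hd)
    omega
  · have h1 : (d : ℤ) * ((x * v) / d) + (x * v) % d = x * v := Int.mul_ediv_add_emod _ _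
    have h3 : (((x * v) % (d:ℤ)).toNat : ℤ) = (x * v) % d := by
      have : 0 ≤ (x * v) % (d : ℤ) := Int.emod_nonneg _ (by positivity)
      omega
    rw [h3]
    linear_combination (-x) * huv - (m : ℤ) * h1

/-- membership characterization after gluing -/
lemma glue_mem (T : AddSubmonoid ℕ) (d m : ℕ) (hd : 0 < d) (hco : Nat.Coprime d m)
    (hmT : m ∈ T) (S : AddSubmonoid ℕ)
    (hSdef : S = (T.map (AddMonoidHom.mulLeft d)) ⊔ AddSubmonoid.closure {m})
    (x : ℤ) (a : ℕ) (ha : a < d) (t : ℤ) (hx : x = d * t + a * m) :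
    (S.zmem x ↔ T.zmem t) := by
  constructor
  · rintro ⟨N, hN, hNx⟩
    rw [hSdef, AddSubmonoid.mem_sup] at hN
    obtain ⟨y, hy, z, hz, hyz⟩ := hN
    obtain ⟨t0, ht0, hy0⟩ := AddSubmonoid.mem_map.mp hy
    obtain ⟨a0, ha0⟩ := AddSubmonoid.mem_closure_singleton.mp hz
    have hy0' : d * t0 = y := hy0
    have ha0' : a0 * m = z := by rw [← ha0, smul_eq_mul]
    -- reduce a0 mod d
    set q := a0 / d with hq
    set a1 := a0 % d with ha1
    have ha1d : a1 < d := Nat.mod_lt _ hd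
    have ht1 : t0 + q * m ∈ T := add_mem ht0 (by
      have := AddSubmonoid.nsmul_mem T hmT q
      rwa [smul_eq_mul] at this)
    have hNeq : N = d * (t0 + q * m) + a1 * m := by
      have := Nat.div_add_mod a0 d
      calc N = d * t0 + a0 * m := by rw [hy0', ha0', hyz]
        _ = d * (t0 + q * m) + a1 * m := by rw [← this]; ring
    -- now compare with x = d*t + a*m
    have hxx : (d : ℤ) * t + a * m = (d : ℤ) * (t0 + q * m : ℕ) + (a1 : ℕ) * m := by
      rw [← hx, ← hNx, hNeq]; push_cast; ring
    have hco' : IsCoprime (d : ℤ) (m : ℤ) := by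
      rw [Int.isCoprime_iff_gcd_eq_one]; exact_mod_cast hco
    have hdvd : (d : ℤ) ∣ ((a1 : ℤ) - a) * m :=
      ⟨t - (t0 + q * m : ℕ), by linear_combination -hxx⟩
    have hdvd2 : (d : ℤ) ∣ ((a1 : ℤ) - a) := hco'.dvd_of_dvd_mul_right hdvd
    obtain ⟨c, hc⟩ := hdvd2
    have hdZ : (0 : ℤ) < d := by exact_mod_cast hd
    have haZ : (a : ℤ) < d := by exact_mod_cast ha
    have ha1Z : (a1 : ℤ) < d := by exact_mod_cast ha1d
    have ha0Z : (0 : ℤ) ≤ a := Int.natCast_nonneg a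
    have ha10Z : (0 : ℤ) ≤ a1 := Int.natCast_nonneg a1
    have hc0 : c = 0 := by
      rcases lt_trichotomy c 0 with h | h | h
      · have h2 : (d : ℤ) * c ≤ d * (-1) := mul_le_mul_of_nonneg_left (by omega) (by omega)
        linarith
      · exact h
      · have h2 : (d : ℤ) * 1 ≤ d * c := mul_le_mul_of_nonneg_left (by omega) (by omega)
        linarith
    have haa : (a1 : ℤ) = a := by rw [hc0, mul_zero] at hc; linarith
    have hteq : t = ((t0 + q * m : ℕ) : ℤ) := by
      have hd0 : (d : ℤ) ≠ 0 := by positivity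
      have : (d : ℤ) * t = (d : ℤ) * ((t0 + q * m : ℕ) : ℤ) := by
        rw [haa] at hxx; linarith [hxx]
      exact mul_left_cancel₀ hd0 this
    exact ⟨t0 + q * m, ht1, hteq.symm⟩
  · rintro ⟨tn, htn, rfl⟩
    refine ⟨d * tn + a * m, ?_, by push_cast [hx]; ring⟩
    rw [hSdef, AddSubmonoid.mem_sup]
    exact ⟨d * tn, AddSubmonoid.mem_map.mpr ⟨tn, htn, rfl⟩, a * m,
      AddSubmonoid.mem_closure_singleton.mpr ⟨a, by rw [smul_eq_mul]⟩, rfl⟩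

/-- gluing preserves symmetry -/
lemma glue (T : AddSubmonoid ℕ) (gT : ℤ) (hT : ∀ x : ℤ, ¬ T.zmem x ↔ T.zmem (gT - x))
    (d m : ℕ) (hd : 0 < d) (hco : Nat.Coprime d m) (hmT : m ∈ T)
    (S : AddSubmonoid ℕ)
    (hSdef : S = (T.map (AddMonoidHom.mulLeft d)) ⊔ AddSubmonoid.closure {m}) :
    ∃ g : ℤ, ∀ x : ℤ, ¬ S.zmem x ↔ S.zmem (g - x) := by
  refine ⟨(d : ℤ) * gT + ((d : ℤ) - 1) * m, fun x => ?_⟩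
  obtain ⟨a, ha, t, hx⟩ := exists_residue d m hd hco x
  have h1 := glue_mem T d m hd hco hmT S hSdef x a ha t hx
  have ha' : d - 1 - a < d := by omega
  have hx' : (d : ℤ) * gT + ((d : ℤ) - 1) * m - x = d * (gT - t) + (d - 1 - a : ℕ) * m := by
    have : ((d - 1 - a : ℕ) : ℤ) = (d : ℤ) - 1 - a := by omega
    rw [this, hx]; ring
  have h2 := glue_mem T d m hd hco hmT S hSdef _ _ ha' (gT - t) hx'
  rw [h1, h2, hT]

/-- gcd over an image -/
lemma gcd_image' {ι κ : Type*} [DecidableEq κ] (s : Finset ι) (g : ι → κ) (f : κ → ℕ) :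
    (s.image g).gcd f = s.gcd (f ∘ g) := by
  apply Nat.dvd_antisymm
  · apply Finset.dvd_gcd; intro i hi
    exact Finset.gcd_dvd (Finset.mem_image_of_mem g hi)
  · apply Finset.dvd_gcd; intro j hj
    obtain ⟨i, hi, rfl⟩ := Finset.mem_image.mp hj
    exact Finset.gcd_dvd hi

lemma nat_gcd_div {a b c : ℕ} (ha : c ∣ a) (hb : c ∣ b) :
    Nat.gcd (a / c) (b / c) = Nat.gcd a b / c := by
  obtain ⟨a', rfl⟩ := ha; obtain ⟨b', rfl⟩ := hb
  rcases Nat.eq_zero_or_pos c with rfl | hc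
  · simp
  · rw [Nat.mul_div_cancel_left _ hc, Nat.mul_div_cancel_left _ hc, Nat.gcd_mul_left,
      Nat.mul_div_cancel_left _ hc]

lemma gcd_div {ι : Type*} (s : Finset ι) (f : ι → ℕ) (c : ℕ) (h : ∀ i ∈ s, c ∣ f i) :
    s.gcd (fun i => f i / c) = s.gcd f / c := by
  classical
  induction s using Finset.induction_on with
  | empty => simp
  | insert a s hni ih =>
    rw [Finset.gcd_insert, Finset.gcd_insert, ih (fun i hi => h i (Finset.mem_insert_of_mem hi))]
    have h1 : c ∣ f a := h a (Finset.mem_insert_self a s)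
    have h2 : c ∣ s.gcd f := Finset.dvd_gcd (fun i hi => h i (Finset.mem_insert_of_mem hi))
    exact nat_gcd_div h1 h2

lemma divdivdiv {a b c : ℕ} (hcb : c ∣ b) (hba : b ∣ a) : a / c / (b / c) = a / b := by
  obtain ⟨e, rfl⟩ := hcb
  obtain ⟨q, rfl⟩ := hba
  rcases Nat.eq_zero_or_pos c with rfl | hc
  · simp
  · rcases Nat.eq_zero_or_pos e with rfl | he
    · simp
    · have h1 : c * e * q / c = e * q := by rw [mul_assoc]; exact Nat.mul_div_cancel_left _ hc
      have h2 : c * e / c = e := Nat.mul_div_cancel_left _ hc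
      have h3 : c * e * q / (c * e) = q := Nat.mul_div_cancel_left _ (Nat.mul_pos hc he)
      rw [h1, h2, h3]
      exact Nat.mul_div_cancel_left _ he

lemma main : ∀ (k : ℕ) (n : Fin (k+1) → ℕ), IsTelescopic (k+1) n →
    ∃ g : ℤ, ∀ x : ℤ, ¬ (AddSubmonoid.closure (Set.range n)).zmem x ↔
      (AddSubmonoid.closure (Set.range n)).zmem (g - x) := by
  intro k
  induction k with
  | zero =>
    intro n htel
    obtain ⟨_, _, hgcd, _⟩ := htel
    have hn0 : n 0 = 1 := by
      have : (Finset.univ : Finset (Fin 1)) = {0} := rfl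
      rw [this, Finset.gcd_singleton] at hgcd
      simpa using hgcd
    have htop : ∀ N : ℕ, N ∈ AddSubmonoid.closure (Set.range n) := by
      intro N
      have h1 : (1 : ℕ) ∈ Set.range n := ⟨0, hn0⟩
      have := AddSubmonoid.nsmul_mem (AddSubmonoid.closure (Set.range n))
        (AddSubmonoid.subset_closure h1) N
      simpa using this
    refine ⟨-1, fun x => ?_⟩
    constructor
    · intro hx
      have hneg : x < 0 := by
        by_contra h
        exact hx ⟨x.toNat, htop _, Int.toNat_of_nonneg (by omega)⟩
      exact ⟨(-1 - x).toNat, htop _, Int.toNat_of_nonneg (by omega)⟩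
    · intro hx hx2
      have h1 := zmem_nonneg hx
      have h2 := zmem_nonneg hx2
      omega
  | succ k ih =>
    intro n htel
    obtain ⟨hmono, hpos, hgcd, hstep⟩ := htel
    set L : Fin (k+2) := Fin.last (k+1) with hL
    set d : ℕ := (Finset.univ.filter (fun j => j < L)).gcd n with hd
    set m : ℕ := n L with hm
    set n' : Fin (k+1) → ℕ := fun j => n j.castSucc / d with hn'
    have hdvd : ∀ j : Fin (k+2), j < L → d ∣ n j := fun j hj =>
      Finset.gcd_dvd (by simp [hj])
    have h0L : (0 : Fin (k+2)) < L := by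
      simp [hL, Fin.lt_def]
    have hdpos : 0 < d := Nat.pos_of_dvd_of_pos (hdvd 0 h0L) (hpos 0)
    -- univ = insert L (filter < L)
    have huniv : (Finset.univ : Finset (Fin (k+2))) =
        insert L (Finset.univ.filter (fun j => j < L)) := by
      ext j
      simp only [Finset.mem_univ, Finset.mem_insert, Finset.mem_filter, true_and, true_iff]
      have hjL : j ≤ L := Fin.le_last j
      rcases hjL.lt_or_eq with h | h
      · right; exact h
      · left; exact h
    have hco : Nat.Coprime d m := by
      have : Nat.gcd m d = 1 := by
        have := hgcd
        rw [huniv, Finset.gcd_insert] at this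
        exact this
      exact Nat.Coprime.symm this
    -- image lemmas
    have himage_univ : (Finset.univ : Finset (Fin (k+1))).image Fin.castSucc =
        Finset.univ.filter (fun j => j < L) := by
      ext j
      simp only [Finset.mem_image, Finset.mem_univ, true_and, Finset.mem_filter, true_iff]
      constructor
      · rintro ⟨i, rfl⟩; exact Fin.castSucc_lt_last i
      · intro hj
        have hv : j.val < k + 1 := by rw [Fin.lt_def] at hj; simpa [hL] using hj
        exact ⟨⟨j.val, hv⟩, by ext; simp⟩
    have himage_le : ∀ i : Fin (k+1),
        (Finset.univ.filter (fun j => j ≤ i)).image Fin.castSucc =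
        Finset.univ.filter (fun j => j ≤ i.castSucc) := by
      intro i
      ext j
      simp only [Finset.mem_image, Finset.mem_filter, Finset.mem_univ, true_and]
      constructor
      · rintro ⟨i', hi', rfl⟩
        rwa [Fin.castSucc_le_castSucc_iff]
      · intro hj
        have hv : j.val < k + 1 := by
          rw [Fin.le_def] at hj; simp at hj; omega
        refine ⟨⟨j.val, hv⟩, ?_, by ext; simp⟩
        rw [Fin.le_def] at hj ⊢
        simpa using hj
    have himage_lt : ∀ i : Fin (k+1),
        (Finset.univ.filter (fun j => j < i)).image Fin.castSucc =
        Finset.univ.filter (fun j => j < i.castSucc) := by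
      intro i
      ext j
      simp only [Finset.mem_image, Finset.mem_filter, Finset.mem_univ, true_and]
      constructor
      · rintro ⟨i', hi', rfl⟩
        rwa [Fin.castSucc_lt_castSucc_iff]
      · intro hj
        have hv : j.val < k + 1 := by
          rw [Fin.lt_def] at hj; simp at hj; omega
        refine ⟨⟨j.val, hv⟩, ?_, by ext; simp⟩
        rw [Fin.lt_def] at hj ⊢
        simpa using hj
    -- range n' as a set
    have hrange : Set.range n' = {v : ℕ | ∃ j : Fin (k+2), j < L ∧ v = n j / d} := by
      ext v
      constructor
      · rintro ⟨j, rfl⟩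
        exact ⟨j.castSucc, Fin.castSucc_lt_last j, rfl⟩
      · rintro ⟨j, hj, rfl⟩
        have hv : j.val < k + 1 := by rw [Fin.lt_def] at hj; simpa [hL] using hj
        have hcast : (⟨j.val, hv⟩ : Fin (k+1)).castSucc = j := by ext; simp
        refine ⟨⟨j.val, hv⟩, ?_⟩
        show n (⟨j.val, hv⟩ : Fin (k+1)).castSucc / d = n j / d
        rw [hcast]
    -- m ∈ T
    have hfilterle : (Finset.univ.filter (fun j => j ≤ L)) = (Finset.univ : Finset (Fin (k+2))) := by
      ext j
      simp only [Finset.mem_filter, Finset.mem_univ, true_and, iff_true]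
      exact Fin.le_last j
    have hpartL : partialGcd (k+2) n L = 1 := by
      rw [partialGcd, hfilterle, hgcd]
    have hmT : m ∈ AddSubmonoid.closure (Set.range n') := by
      rw [hrange]
      have := hstep L (by simp [hL])
      rwa [hpartL, Nat.div_one] at this
    -- telescopic n'
    have htel' : IsTelescopic (k+1) n' := by
      refine ⟨?_, ?_, ?_, ?_⟩
      · intro i j hij
        exact Nat.div_lt_div_of_lt_of_dvd (hdvd j.castSucc (Fin.castSucc_lt_last j))
          (hmono (Fin.castSucc_lt_castSucc_iff.mpr hij))
      · intro i
        exact Nat.div_pos (Nat.le_of_dvd (hpos _) (hdvd _ (Fin.castSucc_lt_last i))) hdpos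
      · have h1 : (Finset.univ : Finset (Fin (k+1))).gcd n' =
            ((Finset.univ : Finset (Fin (k+1))).gcd (fun j => n j.castSucc)) / d := by
          apply gcd_div
          intro i _
          exact hdvd _ (Fin.castSucc_lt_last i)
        have h2 : ((Finset.univ : Finset (Fin (k+1))).gcd (fun j => n j.castSucc)) = d := by
          rw [hd, ← himage_univ, gcd_image']
          rfl
        rw [h1, h2, Nat.div_self hdpos]
      · intro i hi
        have hstepi := hstep i.castSucc (by simpa using hi)
        set En := (Finset.univ.filter (fun j' => j' < i.castSucc)).gcd n with hEn
        set Dn := partialGcd (k+2) n i.castSucc with hDn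
        have hdDn : d ∣ Dn := by
          apply Finset.dvd_gcd
          intro j hj
          simp only [Finset.mem_filter] at hj
          apply hdvd
          rw [Fin.lt_def]
          have := hj.2
          rw [Fin.le_def] at this
          simp only [Fin.coe_castSucc] at this
          simp [hL]
          omega
        have hdEn : d ∣ En := by
          apply Finset.dvd_gcd
          intro j hj
          simp only [Finset.mem_filter] at hj
          apply hdvd
          rw [Fin.lt_def]
          have := hj.2
          rw [Fin.lt_def] at this
          simp only [Fin.coe_castSucc] at this
          simp [hL]
          omega
        have hDndvd : Dn ∣ n i.castSucc := Finset.gcd_dvd (by simp)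
        have hEndvd : ∀ j : Fin (k+2), j < i.castSucc → En ∣ n j := by
          intro j hj
          exact Finset.gcd_dvd (by simp [hj])
        have hpart' : partialGcd (k+1) n' i = Dn / d := by
          rw [partialGcd, hn']
          rw [gcd_div _ _ d (fun j hj => hdvd _ (Fin.castSucc_lt_last j))]
          congr 1
          rw [hDn, partialGcd, ← himage_le, gcd_image']
          rfl
        have hgcd' : (Finset.univ.filter (fun j' => j' < i)).gcd n' = En / d := by
          rw [hn']
          rw [gcd_div _ _ d (fun j hj => hdvd _ (Fin.castSucc_lt_last j))]
          congr 1
          rw [hEn, ← himage_lt, gcd_image']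
          rfl
        rw [hpart', hgcd']
        have hval : n' i / (Dn / d) = n i.castSucc / Dn := by
          rw [hn']
          exact divdivdiv hdDn hDndvd
        rw [hval]
        have hset : {v : ℕ | ∃ j : Fin (k+1), j < i ∧ v = n' j / (En / d)} =
            {v : ℕ | ∃ j : Fin (k+2), j < i.castSucc ∧ v = n j / En} := by
          ext v
          constructor
          · rintro ⟨j, hj, rfl⟩
            refine ⟨j.castSucc, Fin.castSucc_lt_castSucc_iff.mpr hj, ?_⟩
            show n' j / (En / d) = n j.castSucc / En
            exact divdivdiv hdEn (hEndvd _ (Fin.castSucc_lt_castSucc_iff.mpr hj))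
          · rintro ⟨j, hj, rfl⟩
            have hv : j.val < k + 1 := by
              rw [Fin.lt_def] at hj; simp at hj; omega
            have hcast : (⟨j.val, hv⟩ : Fin (k+1)).castSucc = j := by ext; simp
            refine ⟨⟨j.val, hv⟩, ?_, ?_⟩
            · rw [Fin.lt_def] at hj ⊢; simpa using hj
            · show n j / En = n' ⟨j.val, hv⟩ / (En / d)
              show n j / En = n (⟨j.val, hv⟩ : Fin (k+1)).castSucc / d / (En / d)
              rw [hcast]
              exact (divdivdiv hdEn (hEndvd _ hj)).symm
        rw [hset]
        exact hstepi
    obtain ⟨gT, hT⟩ := ih n' htel'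
    -- decompose S
    have hSdec : AddSubmonoid.closure (Set.range n) =
        ((AddSubmonoid.closure (Set.range n')).map (AddMonoidHom.mulLeft d)) ⊔
          AddSubmonoid.closure {m} := by
      have hsets : Set.range n = (fun x => d * x) '' (Set.range n') ∪ {m} := by
        ext v
        constructor
        · rintro ⟨j, rfl⟩
          rcases eq_or_lt_of_le (Fin.le_last j) with h | h
          · right; rw [h]; rfl
          · left
            refine ⟨n j / d, ?_, Nat.mul_div_cancel' (hdvd j h)⟩
            rw [hrange]
            exact ⟨j, h, rfl⟩
        · rintro (⟨w, hw, rfl⟩ | h)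
          · rw [hrange] at hw
            obtain ⟨j, hj, rfl⟩ := hw
            exact ⟨j, (Nat.mul_div_cancel' (hdvd j hj)).symm⟩
          · have hvm : v = m := h
            exact ⟨L, hvm.symm⟩
      rw [hsets, AddSubmonoid.closure_union, AddMonoidHom.map_mclosure]
      rfl
    exact glue _ gT hT d m hdpos hco hmT _ hSdec

end Stmt4Aux


/-- every telescopic numerical semigroup is symmetric. -/
theorem stmt4 (k : ℕ) (hk : 0 < k) (n : Fin k → ℕ) (htel : IsTelescopic k n)
    (S : AddSubmonoid ℕ) (hS : S = AddSubmonoid.closure (Set.range n)) :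
    ∀ x : ℤ, ¬ S.zmem x ↔ S.zmem (frobeniusNumber S - x) := by
  subst hS
  obtain ⟨k', rfl⟩ : ∃ k', k = k' + 1 := ⟨k - 1, by omega⟩
  obtain ⟨g, hg⟩ := Stmt4Aux.main k' n htel
  set S := AddSubmonoid.closure (Set.range n) with hSd
  have hgmem : ¬ S.zmem g := by
    rw [hg g]
    refine ⟨0, S.zero_mem, by simp⟩
  have hub : ∀ x ∈ {x : ℤ | ¬ S.zmem x}, x ≤ g := by
    intro x hx
    by_contra h
    have h1 : ¬ S.zmem (g - x) := fun h2 => by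
      have := Stmt4Aux.zmem_nonneg h2; omega
    exact h1 ((hg x).mp hx)
  have hfro : frobeniusNumber S = g := by
    rw [frobeniusNumber]
    apply le_antisymm
    · exact csSup_le ⟨g, hgmem⟩ hub
    · exact le_csSup ⟨g, hub⟩ hgmem
  intro x
  rw [hfro]
  exact hg x
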